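/- The deterministic stability function of the two-stage Adams–Moulton predictor–corrector method with parameter θ, R(x) = (1 + x(1/2 + θ(1 + γ₂x)/(1 − γ₁x)))/(1 − γ₁x) with γ₁ = 1/2 − θ, γ₂ = 1/2 + θ, satisfies: for θ = −1/2 − 1/√2, |R(x)| < 1 for all x < 0 (the method is A-stable on the negative real axis). -/

import Mathlib

/-- The deterministic stability function of the two-stage Adams–Moulton
predictor–corrector method with parameter `θ`,
`R(x) = (1 + x(1/2 + θ(1 + γ₂x)/(1 − γ₁x)))/(1 − γ₁x)` with `γ₁ = 1/2 − θ`,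
`γ₂ = 1/2 + θ`, satisfies for `θ = −1/2 − 1/√2`: `|R(x)| < 1` for all `x < 0`
(A-stability on the negative real axis). -/
theorem ssamm_minus_A_stable_neg_axis (θ γ₁ γ₂ : ℝ)
    (hθ : θ = -1/2 - 1/Real.sqrt 2) (hγ₁ : γ₁ = 1/2 - θ) (hγ₂ : γ₂ = 1/2 + θ) :
    ∀ x : ℝ, x < 0 →
      |(1 + x * (1/2 + θ * (1 + γ₂ * x) / (1 - γ₁ * x))) / (1 - γ₁ * x)| < 1 := by
  intro x hx
  have hs : (1:ℝ) < Real.sqrt 2 := by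
    nlinarith [Real.sq_sqrt (by norm_num : (0:ℝ) ≤ 2), Real.sqrt_nonneg 2]
  set u : ℝ := 1 / Real.sqrt 2 with hu
  have hupos : 0 < u := by positivity
  have hu2 : u * u = 1 / 2 := by
    rw [hu, div_mul_div_comm, one_mul, Real.mul_self_sqrt (by norm_num : (0:ℝ) ≤ 2)]
  have hθ' : θ = -1/2 - u := hθ
  have hγ₁' : γ₁ = 1 + u := by rw [hγ₁, hθ']; ring
  have hγ₂' : γ₂ = -u := by rw [hγ₂, hθ']; ring
  have hd : 0 < 1 - γ₁ * x := by rw [hγ₁']; nlinarith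
  have hdne : (1 : ℝ) - γ₁ * x ≠ 0 := ne_of_gt hd
  have hNd : (1 + x * (1/2 + θ * (1 + γ₂ * x) / (1 - γ₁ * x))) * (1 - γ₁ * x)
      = 1 - (1 + 2*u) * x := by
    have e : θ * (1 + γ₂ * x) / (1 - γ₁ * x) * (1 - γ₁ * x) = θ * (1 + γ₂ * x) := div_mul_cancel₀ _ hdne
    rw [hθ', hγ₁', hγ₂'] at e ⊢
    linear_combination x * e + x^2 * hu2
  have key : (1 + x * (1/2 + θ * (1 + γ₂ * x) / (1 - γ₁ * x))) / (1 - γ₁ * x)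
      = (1 - (1 + 2*u) * x) / ((1 - γ₁ * x)^2) := by
    rw [← hNd, pow_two, ← mul_div_mul_right _ _ hdne]
  rw [key]
  have hN : 0 < 1 - (1 + 2*u) * x := by nlinarith
  have hd2 : 0 < (1 - γ₁ * x)^2 := by positivity
  rw [abs_of_pos (div_pos hN hd2), div_lt_one hd2, hγ₁']
  nlinarith [mul_pos (neg_pos.mpr hx) (neg_pos.mpr hx),
    mul_pos (mul_pos (neg_pos.mpr hx) (neg_pos.mpr hx)) hupos,
    mul_pos (neg_pos.mpr hx) hupos, hu2]
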